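/- (Theorem 2, expected local regret of the time-smoothed online stochastic prox-grad method.) Let g : ℝⁿ → ℝ ∪ {+∞} be proper, convex and lower semicontinuous, η > 0, δ > 0, σ > 0, T ≥ 1, w ∈ {1, …, T}, and let f_t : ℝⁿ → ℝ (t = 1, …, T, with f_t ≡ 0 for t ≤ 0) be differentiable. Let (Ω, F, P) be a probability space and, for each t = 1, …, T, let x_t, a_t, d_t, e_t, e'_t : Ω → ℝⁿ be square-integrable random vectors with x_t valued in dom g, satisfying almost surely: (i) ‖P_η^g(x_t; a_t)‖ ≤ δ/w; (ii) d_t = a_t + (1/w)(e_t − e'_t); and in expectation: (iii) E[‖e_t − ∇f_t(x_t)‖²] ≤ σ²/w² and E[‖e'_t − ∇f_{t−w}(x_t)‖²] ≤ σ²/w²; (iv) E[‖d_t − ∇S_{t,w}(x_t)‖²] ≤ σ²/w². Then the expected local regret satisfies E[Σ_{t=1}^T ‖P_η^g(x_t; ∇S_{t,w}(x_t))‖²] ≤ (4T/w²)·(δ² + 7σ²) + (12/w²)·E[Σ_{t=1}^T ‖∇f_t(x_t) − ∇f_{t−w}(x_t)‖²]. -/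

import Mathlib

noncomputable section

open Finset MeasureTheory
open scoped RealInnerProductSpace

/-- `g : ℝⁿ → ℝ ∪ {+∞}` is proper, convex and lower semicontinuous. -/
def ProperConvexLsc {n : ℕ} (g : EuclideanSpace ℝ (Fin n) → WithTop ℝ) : Prop :=
  (∃ x, g x ≠ ⊤) ∧ LowerSemicontinuous g ∧
    ∀ x y : EuclideanSpace ℝ (Fin n), ∀ a b : ℝ, 0 ≤ a → 0 ≤ b → a + b = 1 →
      g (a • x + b • y) ≤ (a : WithTop ℝ) * g x + (b : WithTop ℝ) * g y

/-- `p` is a minimizer of `z ↦ η·g(z) + ½‖u − z‖²`. -/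
def IsProxPt {n : ℕ} (g : EuclideanSpace ℝ (Fin n) → WithTop ℝ) (η : ℝ)
    (u p : EuclideanSpace ℝ (Fin n)) : Prop :=
  ∀ z : EuclideanSpace ℝ (Fin n),
    (η : WithTop ℝ) * g p + ((1 / 2 * ‖u - p‖ ^ 2 : ℝ) : WithTop ℝ) ≤
      (η : WithTop ℝ) * g z + ((1 / 2 * ‖u - z‖ ^ 2 : ℝ) : WithTop ℝ)

/-- `prox` is the proximal operator of `ηg`: `prox u` is the unique minimizer of
`z ↦ η·g(z) + ½‖u − z‖²`. -/
def IsProxFun {n : ℕ} (g : EuclideanSpace ℝ (Fin n) → WithTop ℝ) (η : ℝ)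
    (prox : EuclideanSpace ℝ (Fin n) → EuclideanSpace ℝ (Fin n)) : Prop :=
  ∀ u, IsProxPt g η u (prox u) ∧ ∀ q, IsProxPt g η u q → q = prox u

/-- The prox-grad residual `P_η^g(x; d) = (x − prox_{ηg}(x − η d))/η`. -/
def proxRes {n : ℕ} (prox : EuclideanSpace ℝ (Fin n) → EuclideanSpace ℝ (Fin n)) (η : ℝ)
    (x d : EuclideanSpace ℝ (Fin n)) : EuclideanSpace ℝ (Fin n) :=
  η⁻¹ • (x - prox (x - η • d))


section AuxStmt11

variable {n : ℕ}

private lemma stmt11_small_t (c K : ℝ) (h : ∀ t : ℝ, 0 < t → t ≤ 1 → c ≤ t * K) : c ≤ 0 := by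
  by_contra hc
  push_neg at hc
  rcases le_or_gt K 0 with hK | hK
  · have := h 1 one_pos le_rfl; nlinarith
  · have ht : (0:ℝ) < min 1 (c / (2 * K)) := lt_min one_pos (by positivity)
    have := h _ ht (min_le_left _ _)
    have h2 : min 1 (c / (2 * K)) ≤ c / (2 * K) := min_le_right _ _
    have h3 := mul_le_mul_of_nonneg_right h2 hK.le
    have h4 : c / (2 * K) * K = c / 2 := by field_simp
    linarith

private lemma stmt11_prox_finite {g : EuclideanSpace ℝ (Fin n) → WithTop ℝ}
    (hg : ProperConvexLsc g) {η : ℝ} (hη : 0 < η) {u p : EuclideanSpace ℝ (Fin n)}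
    (hp : IsProxPt g η u p) : g p ≠ ⊤ := by
  obtain ⟨⟨x₀, hx₀⟩, -, -⟩ := hg
  intro htop
  have := hp x₀
  rw [htop] at this
  have hηne : ((η : ℝ) : WithTop ℝ) ≠ 0 := by simp [hη.ne']
  rw [WithTop.mul_top hηne] at this
  obtain ⟨r, hr⟩ := WithTop.ne_top_iff_exists.mp hx₀
  rw [← hr] at this
  simp [← WithTop.coe_mul, ← WithTop.coe_add] at this

private lemma stmt11_prox_var {g : EuclideanSpace ℝ (Fin n) → WithTop ℝ}
    (hg : ProperConvexLsc g) {η : ℝ} (hη : 0 < η) {u p q : EuclideanSpace ℝ (Fin n)}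
    (hp : IsProxPt g η u p) (hq : ∃ v, IsProxPt g η v q) :
    ∃ gp gq : ℝ, g p = (gp : WithTop ℝ) ∧ g q = (gq : WithTop ℝ) ∧
      η * (gp - gq) + ⟪u - p, q - p⟫ ≤ 0 := by
  obtain ⟨gp, hgp⟩ := WithTop.ne_top_iff_exists.mp (stmt11_prox_finite hg hη hp)
  obtain ⟨v, hqv⟩ := hq
  obtain ⟨gq, hgq⟩ := WithTop.ne_top_iff_exists.mp (stmt11_prox_finite hg hη hqv)
  refine ⟨gp, gq, hgp.symm, hgq.symm, ?_⟩
  apply stmt11_small_t _ (1/2 * ‖q - p‖^2)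
  intro t ht ht1
  set z := (1 - t) • p + t • q with hz
  obtain ⟨-, -, hconv⟩ := hg
  have hgz : g z ≤ (((1 - t) * gp + t * gq : ℝ) : WithTop ℝ) := by
    calc g z ≤ ((1-t : ℝ) : WithTop ℝ) * g p + ((t:ℝ) : WithTop ℝ) * g q :=
          hconv p q (1-t) t (by linarith) ht.le (by ring)
      _ = _ := by rw [← hgp, ← hgq, ← WithTop.coe_mul, ← WithTop.coe_mul, ← WithTop.coe_add]
  obtain ⟨gz, hgz'⟩ := WithTop.ne_top_iff_exists.mp (ne_top_of_le_ne_top WithTop.coe_ne_top hgz)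
  have hgzle : gz ≤ (1 - t) * gp + t * gq := by
    rw [← hgz'] at hgz; exact_mod_cast hgz
  have hineq := hp z
  rw [← hgp, ← hgz'] at hineq
  rw [← WithTop.coe_mul, ← WithTop.coe_mul, ← WithTop.coe_add, ← WithTop.coe_add] at hineq
  have hre : η * gp + 1/2 * ‖u - p‖^2 ≤ η * gz + 1/2 * ‖u - z‖^2 := by exact_mod_cast hineq
  have hz2 : u - z = (u - p) - t • (q - p) := by rw [hz]; module
  have hexp : ‖u - z‖^2 = ‖u - p‖^2 - 2 * t * ⟪u - p, q - p⟫ + t^2 * ‖q - p‖^2 := by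
    rw [hz2, norm_sub_sq_real, real_inner_smul_right, norm_smul]
    simp [mul_pow, abs_of_pos ht]
    ring
  have hη' := hη.le
  have : η * gp ≤ η * ((1-t)*gp + t*gq) + (-(t * ⟪u - p, q - p⟫) + t^2/2 * ‖q - p‖^2) := by
    nlinarith [mul_le_mul_of_nonneg_left hgzle hη']
  have key : t * (η * (gp - gq) + ⟪u - p, q - p⟫) ≤ t^2/2 * ‖q - p‖^2 := by nlinarith
  refine le_of_mul_le_mul_left ?_ ht
  nlinarith [key]

private lemma stmt11_prox_nonexpansive {g : EuclideanSpace ℝ (Fin n) → WithTop ℝ}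
    (hg : ProperConvexLsc g) {η : ℝ} (hη : 0 < η)
    {prox : EuclideanSpace ℝ (Fin n) → EuclideanSpace ℝ (Fin n)}
    (hprox : IsProxFun g η prox) (u v : EuclideanSpace ℝ (Fin n)) :
    ‖prox u - prox v‖ ≤ ‖u - v‖ := by
  obtain ⟨gp, gq, hgp, hgq, h1⟩ := stmt11_prox_var hg hη (hprox u).1 ⟨v, (hprox v).1⟩
  obtain ⟨gq', gp', hgq', hgp', h2⟩ := stmt11_prox_var hg hη (hprox v).1 ⟨u, (hprox u).1⟩
  have hq : gq = gq' := by rw [hgq] at hgq'; exact_mod_cast hgq'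
  have hp : gp = gp' := by rw [hgp] at hgp'; exact_mod_cast hgp'
  subst hq; subst hp
  set P := prox u; set Q := prox v
  have hsum : ⟪u - P, Q - P⟫ + ⟪v - Q, P - Q⟫ ≤ 0 := by linarith
  have hkey : ‖P - Q‖^2 ≤ ⟪u - v, P - Q⟫ := by
    have e1 : ⟪v - Q, P - Q⟫ = -⟪v - Q, Q - P⟫ := by
      rw [← inner_neg_right]; congr 1; abel
    have e2 : ⟪u - P, Q - P⟫ - ⟪v - Q, Q - P⟫ = ⟪u - v - (P - Q), Q - P⟫ := by
      rw [← inner_sub_left]; congr 1; abel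
    have e3 : ⟪u - v - (P - Q), Q - P⟫ = -⟪u - v, P - Q⟫ + ‖P - Q‖^2 := by
      rw [inner_sub_left]
      have h4 : ⟪u - v, Q - P⟫ = -⟪u - v, P - Q⟫ := by
        rw [← inner_neg_right]; congr 1; abel
      rw [h4]
      have h5 : ⟪P - Q, Q - P⟫ = -‖P - Q‖^2 := by
        rw [show Q - P = -(P - Q) by abel, inner_neg_right, real_inner_self_eq_norm_sq]
      rw [h5]; ring
    nlinarith [hsum, e1, e2, e3]
  rcases eq_or_ne (P - Q) 0 with h0 | h0
  · rw [show ‖P - Q‖ = 0 by rw [h0, norm_zero]]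
    exact norm_nonneg _
  · have := real_inner_le_norm (u - v) (P - Q)
    have hn : 0 < ‖P - Q‖ := norm_pos_iff.mpr h0
    nlinarith

private lemma stmt11_proxRes_lip {prox : EuclideanSpace ℝ (Fin n) → EuclideanSpace ℝ (Fin n)}
    (hne : ∀ u v, ‖prox u - prox v‖ ≤ ‖u - v‖) {η : ℝ} (hη : 0 < η)
    (X D A : EuclideanSpace ℝ (Fin n)) :
    ‖proxRes prox η X D - proxRes prox η X A‖ ≤ ‖D - A‖ := by
  have h1 : proxRes prox η X D - proxRes prox η X A
      = η⁻¹ • (prox (X - η • A) - prox (X - η • D)) := by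
    unfold proxRes; module
  rw [h1, norm_smul]
  have h2 := hne (X - η • A) (X - η • D)
  have h3 : (X - η • A) - (X - η • D) = η • (D - A) := by module
  rw [h3, norm_smul] at h2
  simp only [Real.norm_eq_abs, abs_of_pos hη, abs_of_pos (inv_pos.mpr hη)] at *
  calc η⁻¹ * ‖prox (X - η • A) - prox (X - η • D)‖ ≤ η⁻¹ * (η * ‖D - A‖) := by
        exact mul_le_mul_of_nonneg_left h2 (inv_pos.mpr hη).le
    _ = ‖D - A‖ := by field_simp

private lemma stmt11_pt_bound {prox : EuclideanSpace ℝ (Fin n) → EuclideanSpace ℝ (Fin n)}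
    (hne : ∀ u v, ‖prox u - prox v‖ ≤ ‖u - v‖) {η : ℝ} (hη : 0 < η)
    {c wi : ℝ} (hwi : 0 ≤ wi)
    (X D A dv E E' F F2 : EuclideanSpace ℝ (Fin n))
    (hstop : ‖proxRes prox η X A‖ ≤ c)
    (hupd : dv = A + wi • (E - E')) :
    ‖proxRes prox η X D‖ ^ 2 ≤
      2 * c ^ 2 + 8 * ‖dv - D‖ ^ 2 + 8 * wi ^ 2 * ‖E - F‖ ^ 2
        + 8 * wi ^ 2 * ‖E' - F2‖ ^ 2 + 8 * wi ^ 2 * ‖F - F2‖ ^ 2 := by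
  have hdecomp : D - A = (D - dv) + wi • (E - F) - wi • (E' - F2) + wi • (F - F2) := by
    rw [hupd]; module
  have htri : ‖D - A‖ ≤ ‖D - dv‖ + wi * ‖E - F‖ + wi * ‖E' - F2‖ + wi * ‖F - F2‖ := by
    rw [hdecomp]
    calc ‖(D - dv) + wi • (E - F) - wi • (E' - F2) + wi • (F - F2)‖
        ≤ ‖(D - dv) + wi • (E - F) - wi • (E' - F2)‖ + ‖wi • (F - F2)‖ := norm_add_le _ _
      _ ≤ ‖(D - dv) + wi • (E - F)‖ + ‖wi • (E' - F2)‖ + ‖wi • (F - F2)‖ := by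
          have := norm_sub_le ((D - dv) + wi • (E - F)) (wi • (E' - F2)); linarith
      _ ≤ ‖D - dv‖ + ‖wi • (E - F)‖ + ‖wi • (E' - F2)‖ + ‖wi • (F - F2)‖ := by
          have := norm_add_le (D - dv) (wi • (E - F)); linarith
      _ = ‖D - dv‖ + wi * ‖E - F‖ + wi * ‖E' - F2‖ + wi * ‖F - F2‖ := by
          simp [norm_smul, Real.norm_eq_abs, abs_of_nonneg hwi]
  have htri2 : ‖proxRes prox η X D‖ ≤ c + ‖D - A‖ := by
    have h := stmt11_proxRes_lip hne hη X D A
    have := norm_add_le (proxRes prox η X A) (proxRes prox η X D - proxRes prox η X A)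
    simp only [add_sub_cancel] at this
    linarith
  have hDdv : ‖D - dv‖ = ‖dv - D‖ := by rw [← norm_neg]; congr 1; abel
  rw [hDdv] at htri
  have n1 := norm_nonneg (dv - D)
  have n2 := norm_nonneg (E - F)
  have n3 := norm_nonneg (E' - F2)
  have n4 := norm_nonneg (F - F2)
  have n5 := norm_nonneg (proxRes prox η X D)
  have n6 := norm_nonneg (D - A)
  have hc : 0 ≤ c := le_trans (norm_nonneg _) hstop
  nlinarith [sq_nonneg (‖dv - D‖ - wi * ‖E - F‖), sq_nonneg (‖dv - D‖ - wi * ‖E' - F2‖),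
    sq_nonneg (‖dv - D‖ - wi * ‖F - F2‖), sq_nonneg (wi * ‖E - F‖ - wi * ‖E' - F2‖),
    sq_nonneg (wi * ‖E - F‖ - wi * ‖F - F2‖), sq_nonneg (wi * ‖E' - F2‖ - wi * ‖F - F2‖),
    sq_nonneg (c - ‖D - A‖), mul_self_nonneg (c + ‖D - A‖),
    mul_le_mul htri2 htri2 n5 (by positivity), mul_le_mul htri htri n6 (by positivity)]

end AuxStmt11

set_option maxHeartbeats 1000000 in
/-- Theorem 2: expected local regret of the time-smoothed online stochastic
prox-grad method.  Here `x_t` are the iterates (valued in `dom g`), `a_t` is the stochastic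
gradient estimate of `∇S_{t−1,w}(x_t)` returned by the inner loop (with residual `≤ δ/w`),
`e_t, e'_t` are stochastic estimates of `∇f_t(x_t)` and `∇f_{t−w}(x_t)`, and
`d_t = a_t + (1/w)(e_t − e'_t)` is the estimate of `∇S_{t,w}(x_t)`. -/
theorem stmt11 {n : ℕ} {Ω : Type*} [MeasurableSpace Ω] (μ : Measure Ω)
    [IsProbabilityMeasure μ]
    (g : EuclideanSpace ℝ (Fin n) → WithTop ℝ) (hg : ProperConvexLsc g)
    (prox : EuclideanSpace ℝ (Fin n) → EuclideanSpace ℝ (Fin n))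
    (η δ σ : ℝ) (hη : 0 < η) (hδ : 0 < δ) (hσ : 0 < σ)
    (hprox : IsProxFun g η prox)
    (T w : ℕ) (hT : 1 ≤ T) (hw1 : 1 ≤ w) (hwT : w ≤ T)
    (f : ℤ → EuclideanSpace ℝ (Fin n) → ℝ)
    (f' : ℤ → EuclideanSpace ℝ (Fin n) → EuclideanSpace ℝ (Fin n))
    (hf0 : ∀ t ≤ (0 : ℤ), ∀ z, f t z = 0) (hf'0 : ∀ t ≤ (0 : ℤ), ∀ z, f' t z = 0)
    (hgrad : ∀ t z, HasGradientAt (f t) (f' t z) z)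
    (x a d e e' : ℤ → Ω → EuclideanSpace ℝ (Fin n))
    (hx2 : ∀ t ∈ Finset.Icc (1 : ℤ) T, MemLp (x t) 2 μ)
    (ha2 : ∀ t ∈ Finset.Icc (1 : ℤ) T, MemLp (a t) 2 μ)
    (hd2 : ∀ t ∈ Finset.Icc (1 : ℤ) T, MemLp (d t) 2 μ)
    (he2 : ∀ t ∈ Finset.Icc (1 : ℤ) T, MemLp (e t) 2 μ)
    (he'2 : ∀ t ∈ Finset.Icc (1 : ℤ) T, MemLp (e' t) 2 μ)
    (hfx2 : ∀ t ∈ Finset.Icc (1 : ℤ) T, ∀ i ∈ Finset.Icc (t - w) t,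
      MemLp (fun ω => f' i (x t ω)) 2 μ)
    (hdom : ∀ t ∈ Finset.Icc (1 : ℤ) T, ∀ᵐ ω ∂μ, g (x t ω) ≠ ⊤)
    (hstop : ∀ t ∈ Finset.Icc (1 : ℤ) T, ∀ᵐ ω ∂μ,
      ‖proxRes prox η (x t ω) (a t ω)‖ ≤ δ / w)
    (hupd : ∀ t ∈ Finset.Icc (1 : ℤ) T, ∀ᵐ ω ∂μ,
      d t ω = a t ω + (w : ℝ)⁻¹ • (e t ω - e' t ω))
    (he : ∀ t ∈ Finset.Icc (1 : ℤ) T,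
      ∫ ω, ‖e t ω - f' t (x t ω)‖ ^ 2 ∂μ ≤ σ ^ 2 / w ^ 2)
    (he' : ∀ t ∈ Finset.Icc (1 : ℤ) T,
      ∫ ω, ‖e' t ω - f' (t - w) (x t ω)‖ ^ 2 ∂μ ≤ σ ^ 2 / w ^ 2)
    (hd : ∀ t ∈ Finset.Icc (1 : ℤ) T,
      ∫ ω, ‖d t ω - (w : ℝ)⁻¹ • ∑ i ∈ Finset.Icc (t - w + 1) t, f' i (x t ω)‖ ^ 2 ∂μ ≤
        σ ^ 2 / w ^ 2) :
    ∫ ω, (∑ t ∈ Finset.Icc (1 : ℤ) T,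
        ‖proxRes prox η (x t ω)
            ((w : ℝ)⁻¹ • ∑ i ∈ Finset.Icc (t - w + 1) t, f' i (x t ω))‖ ^ 2) ∂μ ≤
      4 * (T : ℝ) / w ^ 2 * (δ ^ 2 + 7 * σ ^ 2) +
        12 / (w : ℝ) ^ 2 *
          ∫ ω, (∑ t ∈ Finset.Icc (1 : ℤ) T, ‖f' t (x t ω) - f' (t - w) (x t ω)‖ ^ 2) ∂μ := by
  have hne : ∀ u v, ‖prox u - prox v‖ ≤ ‖u - v‖ := stmt11_prox_nonexpansive hg hη hprox
  have hcont : Continuous prox := by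
    have hlip : LipschitzWith 1 prox := LipschitzWith.of_dist_le_mul (fun u v => by
      rw [dist_eq_norm, dist_eq_norm]; simpa using hne u v)
    exact hlip.continuous
  have hwpos : (0:ℝ) < w := by exact_mod_cast hw1
  have hw1' : (1:ℝ) ≤ (w:ℝ) := by exact_mod_cast hw1
  have hw2 : (1:ℝ) ≤ (w:ℝ)^2 := by nlinarith
  have hwi : (0:ℝ) ≤ (w:ℝ)⁻¹ := by positivity
  have main : ∀ t ∈ Finset.Icc (1 : ℤ) T,
      Integrable (fun ω => ‖proxRes prox η (x t ω)
        ((w : ℝ)⁻¹ • ∑ i ∈ Finset.Icc (t - w + 1) t, f' i (x t ω))‖ ^ 2) μ ∧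
      Integrable (fun ω => ‖f' t (x t ω) - f' (t - w) (x t ω)‖ ^ 2) μ ∧
      ∫ ω, ‖proxRes prox η (x t ω)
          ((w : ℝ)⁻¹ • ∑ i ∈ Finset.Icc (t - w + 1) t, f' i (x t ω))‖ ^ 2 ∂μ ≤
        (2*δ^2 + 24*σ^2)/(w:ℝ)^2
          + 8/(w:ℝ)^2 * ∫ ω, ‖f' t (x t ω) - f' (t - w) (x t ω)‖ ^ 2 ∂μ := by
    intro t ht
    have hft : MemLp (fun ω => f' t (x t ω)) 2 μ :=
      hfx2 t ht t (by simp only [Finset.mem_Icc]; omega)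
    have hftw : MemLp (fun ω => f' (t - w) (x t ω)) 2 μ :=
      hfx2 t ht (t - w) (by simp only [Finset.mem_Icc]; omega)
    have hDm : MemLp (fun ω => (w : ℝ)⁻¹ • ∑ i ∈ Finset.Icc (t - w + 1) t, f' i (x t ω)) 2 μ := by
      have hsum : MemLp (fun ω => ∑ i ∈ Finset.Icc (t - w + 1) t, f' i (x t ω)) 2 μ :=
        memLp_finset_sum _ (fun i hi => hfx2 t ht i (by
          simp only [Finset.mem_Icc] at hi ⊢; omega))
      exact hsum.const_smul ((w : ℝ)⁻¹)
    have I1 : Integrable (fun ω =>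
        ‖d t ω - (w : ℝ)⁻¹ • ∑ i ∈ Finset.Icc (t - w + 1) t, f' i (x t ω)‖ ^ 2) μ :=
      ((hd2 t ht).sub hDm).norm.integrable_sq
    have I2 : Integrable (fun ω => ‖e t ω - f' t (x t ω)‖ ^ 2) μ :=
      ((he2 t ht).sub hft).norm.integrable_sq
    have I3 : Integrable (fun ω => ‖e' t ω - f' (t - w) (x t ω)‖ ^ 2) μ :=
      ((he'2 t ht).sub hftw).norm.integrable_sq
    have I4 : Integrable (fun ω => ‖f' t (x t ω) - f' (t - w) (x t ω)‖ ^ 2) μ :=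
      (hft.sub hftw).norm.integrable_sq
    have IR : Integrable (fun ω =>
        2*(δ/(w:ℝ))^2
          + 8*‖d t ω - (w : ℝ)⁻¹ • ∑ i ∈ Finset.Icc (t - w + 1) t, f' i (x t ω)‖ ^ 2
          + 8*((w:ℝ)⁻¹)^2*‖e t ω - f' t (x t ω)‖ ^ 2
          + 8*((w:ℝ)⁻¹)^2*‖e' t ω - f' (t - w) (x t ω)‖ ^ 2
          + 8*((w:ℝ)⁻¹)^2*‖f' t (x t ω) - f' (t - w) (x t ω)‖ ^ 2) μ :=
      (((((integrable_const _).add (I1.const_mul 8)).add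
        (I2.const_mul _)).add (I3.const_mul _)).add (I4.const_mul _))
    have hbound : ∀ᵐ ω ∂μ, ‖proxRes prox η (x t ω)
        ((w : ℝ)⁻¹ • ∑ i ∈ Finset.Icc (t - w + 1) t, f' i (x t ω))‖ ^ 2 ≤
        2*(δ/(w:ℝ))^2
          + 8*‖d t ω - (w : ℝ)⁻¹ • ∑ i ∈ Finset.Icc (t - w + 1) t, f' i (x t ω)‖ ^ 2
          + 8*((w:ℝ)⁻¹)^2*‖e t ω - f' t (x t ω)‖ ^ 2
          + 8*((w:ℝ)⁻¹)^2*‖e' t ω - f' (t - w) (x t ω)‖ ^ 2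
          + 8*((w:ℝ)⁻¹)^2*‖f' t (x t ω) - f' (t - w) (x t ω)‖ ^ 2 := by
      filter_upwards [hstop t ht, hupd t ht] with ω h1 h2
      exact stmt11_pt_bound hne hη hwi (x t ω)
        ((w : ℝ)⁻¹ • ∑ i ∈ Finset.Icc (t - w + 1) t, f' i (x t ω))
        (a t ω) (d t ω) (e t ω) (e' t ω) (f' t (x t ω)) (f' (t - w) (x t ω)) h1 h2
    have hmeas : AEStronglyMeasurable (fun ω => ‖proxRes prox η (x t ω)
        ((w : ℝ)⁻¹ • ∑ i ∈ Finset.Icc (t - w + 1) t, f' i (x t ω))‖ ^ 2) μ := by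
      have h0 : AEStronglyMeasurable (fun ω => proxRes prox η (x t ω)
          ((w : ℝ)⁻¹ • ∑ i ∈ Finset.Icc (t - w + 1) t, f' i (x t ω))) μ := by
        unfold proxRes
        exact ((hx2 t ht).aestronglyMeasurable.sub (hcont.comp_aestronglyMeasurable
          ((hx2 t ht).aestronglyMeasurable.sub
            (hDm.aestronglyMeasurable.const_smul η)))).const_smul η⁻¹
      exact h0.norm.pow 2
    have ILHS : Integrable (fun ω => ‖proxRes prox η (x t ω)
        ((w : ℝ)⁻¹ • ∑ i ∈ Finset.Icc (t - w + 1) t, f' i (x t ω))‖ ^ 2) μ := by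
      refine IR.mono' hmeas ?_
      filter_upwards [hbound] with ω hb
      rwa [Real.norm_eq_abs, abs_of_nonneg (by positivity)]
    refine ⟨ILHS, I4, ?_⟩
    have hstep := integral_mono_ae ILHS IR hbound
    have hIR : ∫ ω, (2*(δ/(w:ℝ))^2
          + 8*‖d t ω - (w : ℝ)⁻¹ • ∑ i ∈ Finset.Icc (t - w + 1) t, f' i (x t ω)‖ ^ 2
          + 8*((w:ℝ)⁻¹)^2*‖e t ω - f' t (x t ω)‖ ^ 2
          + 8*((w:ℝ)⁻¹)^2*‖e' t ω - f' (t - w) (x t ω)‖ ^ 2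
          + 8*((w:ℝ)⁻¹)^2*‖f' t (x t ω) - f' (t - w) (x t ω)‖ ^ 2) ∂μ
        = 2*(δ/(w:ℝ))^2
          + 8*∫ ω, ‖d t ω - (w : ℝ)⁻¹ • ∑ i ∈ Finset.Icc (t - w + 1) t, f' i (x t ω)‖ ^ 2 ∂μ
          + 8*((w:ℝ)⁻¹)^2*∫ ω, ‖e t ω - f' t (x t ω)‖ ^ 2 ∂μ
          + 8*((w:ℝ)⁻¹)^2*∫ ω, ‖e' t ω - f' (t - w) (x t ω)‖ ^ 2 ∂μ
          + 8*((w:ℝ)⁻¹)^2*∫ ω, ‖f' t (x t ω) - f' (t - w) (x t ω)‖ ^ 2 ∂μ := by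
      have J0 : Integrable (fun _ : Ω => 2*(δ/(w:ℝ))^2) μ := integrable_const _
      have J1 : Integrable (fun ω => 2*(δ/(w:ℝ))^2
          + 8*‖d t ω - (w : ℝ)⁻¹ • ∑ i ∈ Finset.Icc (t - w + 1) t, f' i (x t ω)‖ ^ 2) μ :=
        J0.add (I1.const_mul 8)
      have J2 : Integrable (fun ω => 2*(δ/(w:ℝ))^2
          + 8*‖d t ω - (w : ℝ)⁻¹ • ∑ i ∈ Finset.Icc (t - w + 1) t, f' i (x t ω)‖ ^ 2
          + 8*((w:ℝ)⁻¹)^2*‖e t ω - f' t (x t ω)‖ ^ 2) μ :=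
        J1.add (I2.const_mul _)
      have J3 : Integrable (fun ω => 2*(δ/(w:ℝ))^2
          + 8*‖d t ω - (w : ℝ)⁻¹ • ∑ i ∈ Finset.Icc (t - w + 1) t, f' i (x t ω)‖ ^ 2
          + 8*((w:ℝ)⁻¹)^2*‖e t ω - f' t (x t ω)‖ ^ 2
          + 8*((w:ℝ)⁻¹)^2*‖e' t ω - f' (t - w) (x t ω)‖ ^ 2) μ :=
        J2.add (I3.const_mul _)
      rw [integral_add J3 (I4.const_mul _), integral_add J2 (I3.const_mul _),
          integral_add J1 (I2.const_mul _), integral_add J0 (I1.const_mul 8),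
          integral_const, integral_const_mul, integral_const_mul, integral_const_mul,
          integral_const_mul]
      simp [measure_univ]
    rw [hIR] at hstep
    -- arithmetic
    have e1 := hd t ht
    have e2 := he t ht
    have e3 := he' t ht
    have p2 : 0 ≤ ∫ ω, ‖e t ω - f' t (x t ω)‖ ^ 2 ∂μ :=
      integral_nonneg (fun ω => by positivity)
    have p3 : 0 ≤ ∫ ω, ‖e' t ω - f' (t - w) (x t ω)‖ ^ 2 ∂μ :=
      integral_nonneg (fun ω => by positivity)
    have hA8 : ((8:ℝ)*((w:ℝ)⁻¹)^2) = 8/(w:ℝ)^2 := by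
      rw [inv_pow]; ring
    have hA8le : (8:ℝ)/(w:ℝ)^2 ≤ 8 := by
      apply div_le_self (by norm_num) hw2
    have c2 : 8*((w:ℝ)⁻¹)^2 * ∫ ω, ‖e t ω - f' t (x t ω)‖ ^ 2 ∂μ ≤ 8 * (σ^2/(w:ℝ)^2) := by
      rw [hA8]
      calc 8/(w:ℝ)^2 * ∫ ω, ‖e t ω - f' t (x t ω)‖ ^ 2 ∂μ
          ≤ 8/(w:ℝ)^2 * (σ^2/(w:ℝ)^2) := by
            apply mul_le_mul_of_nonneg_left e2 (by positivity)
        _ ≤ 8 * (σ^2/(w:ℝ)^2) := by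
            apply mul_le_mul_of_nonneg_right hA8le (by positivity)
    have c3 : 8*((w:ℝ)⁻¹)^2 * ∫ ω, ‖e' t ω - f' (t - w) (x t ω)‖ ^ 2 ∂μ
        ≤ 8 * (σ^2/(w:ℝ)^2) := by
      rw [hA8]
      calc 8/(w:ℝ)^2 * ∫ ω, ‖e' t ω - f' (t - w) (x t ω)‖ ^ 2 ∂μ
          ≤ 8/(w:ℝ)^2 * (σ^2/(w:ℝ)^2) := by
            apply mul_le_mul_of_nonneg_left e3 (by positivity)
        _ ≤ 8 * (σ^2/(w:ℝ)^2) := by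
            apply mul_le_mul_of_nonneg_right hA8le (by positivity)
    have c1 : 8 * ∫ ω, ‖d t ω - (w : ℝ)⁻¹ • ∑ i ∈ Finset.Icc (t - w + 1) t,
        f' i (x t ω)‖ ^ 2 ∂μ ≤ 8 * (σ^2/(w:ℝ)^2) :=
      mul_le_mul_of_nonneg_left e1 (by norm_num)
    have hδw : 2*(δ/(w:ℝ))^2 = 2*(δ^2/(w:ℝ)^2) := by rw [div_pow]
    have hsplit : (2*δ^2 + 24*σ^2)/(w:ℝ)^2 = 2*(δ^2/(w:ℝ)^2) + 24*(σ^2/(w:ℝ)^2) := by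
      ring
    rw [hA8] at hstep c2 c3
    linarith
  have hLHSeq : ∫ ω, (∑ t ∈ Finset.Icc (1 : ℤ) T, ‖proxRes prox η (x t ω)
        ((w : ℝ)⁻¹ • ∑ i ∈ Finset.Icc (t - w + 1) t, f' i (x t ω))‖ ^ 2) ∂μ
      = ∑ t ∈ Finset.Icc (1 : ℤ) T, ∫ ω, ‖proxRes prox η (x t ω)
        ((w : ℝ)⁻¹ • ∑ i ∈ Finset.Icc (t - w + 1) t, f' i (x t ω))‖ ^ 2 ∂μ :=
    integral_finset_sum _ (fun t ht => (main t ht).1)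
  have hRHSeq : ∫ ω, (∑ t ∈ Finset.Icc (1 : ℤ) T,
        ‖f' t (x t ω) - f' (t - w) (x t ω)‖ ^ 2) ∂μ
      = ∑ t ∈ Finset.Icc (1 : ℤ) T, ∫ ω, ‖f' t (x t ω) - f' (t - w) (x t ω)‖ ^ 2 ∂μ :=
    integral_finset_sum _ (fun t ht => (main t ht).2.1)
  rw [hLHSeq, hRHSeq]
  have hsum : ∑ t ∈ Finset.Icc (1 : ℤ) T, ∫ ω, ‖proxRes prox η (x t ω)
        ((w : ℝ)⁻¹ • ∑ i ∈ Finset.Icc (t - w + 1) t, f' i (x t ω))‖ ^ 2 ∂μ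
      ≤ ∑ t ∈ Finset.Icc (1 : ℤ) T, ((2*δ^2 + 24*σ^2)/(w:ℝ)^2
          + 8/(w:ℝ)^2 * ∫ ω, ‖f' t (x t ω) - f' (t - w) (x t ω)‖ ^ 2 ∂μ) :=
    Finset.sum_le_sum (fun t ht => (main t ht).2.2)
  rw [Finset.sum_add_distrib, Finset.sum_const, ← Finset.mul_sum] at hsum
  have hcard : (Finset.Icc (1 : ℤ) (T : ℤ)).card = T := by
    rw [Int.card_Icc]; simp
  rw [hcard, nsmul_eq_mul] at hsum
  have hS4 : 0 ≤ ∑ t ∈ Finset.Icc (1 : ℤ) T, ∫ ω,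
      ‖f' t (x t ω) - f' (t - w) (x t ω)‖ ^ 2 ∂μ :=
    Finset.sum_nonneg (fun t ht => integral_nonneg (fun ω => by positivity))
  have hT0 : (0:ℝ) ≤ T := by positivity
  have h1 : (T:ℝ) * ((2*δ^2 + 24*σ^2)/(w:ℝ)^2) ≤ 4*(T:ℝ)/(w:ℝ)^2*(δ^2 + 7*σ^2) := by
    have hform : 4*(T:ℝ)/(w:ℝ)^2*(δ^2 + 7*σ^2) = (T:ℝ) * ((4*δ^2 + 28*σ^2)/(w:ℝ)^2) := by
      field_simp; ring
    rw [hform]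
    apply mul_le_mul_of_nonneg_left _ hT0
    gcongr <;> norm_num
  have h2 : 8/(w:ℝ)^2 * ∑ t ∈ Finset.Icc (1 : ℤ) T, ∫ ω,
        ‖f' t (x t ω) - f' (t - w) (x t ω)‖ ^ 2 ∂μ
      ≤ 12/(w:ℝ)^2 * ∑ t ∈ Finset.Icc (1 : ℤ) T, ∫ ω,
        ‖f' t (x t ω) - f' (t - w) (x t ω)‖ ^ 2 ∂μ := by
    apply mul_le_mul_of_nonneg_right _ hS4
    gcongr <;> norm_num
  linarith
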